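/- In the transformed Prisoner's Dilemma, the asymmetric profile (C,D) (and symmetrically (D,C)) is a pure-strategy Nash equilibrium of the subjective game if and only if w_max ≤ w ≤ w_min, where w = b/a, w_min = (T−R)/(R−S) and w_max = (P−S)/(T−P). In particular, if w_max < w < w_min then the only pure-strategy Nash equilibria are the asymmetric profiles (C,D) and (D,C). -/
import Mathlib


/-- Pure strategies in the Prisoner's Dilemma. -/
inductive Strategy : Type
  | C : Strategy
  | D : Strategy
deriving DecidableEq

open Strategy

/-- Objective payoff of the row player when she plays `s` against `t`:
`R` at (C,C), `P` at (D,D), `S` for the cooperator and `T` for the defector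
at an asymmetric profile. -/
def payoff (T R P S : ℝ) : Strategy → Strategy → ℝ
  | C, C => R
  | C, D => S
  | D, C => T
  | D, D => P

/-- Subjective utility of a player who plays `s` against `t`:
`u'_i = a·u_i + b·u_j`. -/
def subj (T R P S a b : ℝ) (s t : Strategy) : ℝ :=
  a * payoff T R P S s t + b * payoff T R P S t s

/-- `(s, t)` is a pure-strategy Nash equilibrium of the subjective game:
no player can strictly increase her subjective utility by a unilateral deviation. -/
def IsNash (T R P S a b : ℝ) (s t : Strategy) : Prop :=
  (∀ s' : Strategy, subj T R P S a b s' t ≤ subj T R P S a b s t) ∧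
  (∀ t' : Strategy, subj T R P S a b t' s ≤ subj T R P S a b t s)

/-- the asymmetric profile (C,D) (and symmetrically (D,C)) is a
Nash equilibrium of the subjective game iff `w_max ≤ w ≤ w_min`, where
`w = b/a`, `w_min = (T−R)/(R−S)`, `w_max = (P−S)/(T−P)`.  In particular, if
`w_max < w < w_min` then the only pure-strategy Nash equilibria are the
asymmetric profiles (C,D) and (D,C). -/
theorem asymmetric_nash_iff (T R P S a b : ℝ)
    (hTR : T > R) (hRP : R > P) (hPS : P > S)
    (ha : a > 0) (hb : b ≥ 0) :
    (IsNash T R P S a b Strategy.C Strategy.D ↔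
      (P - S) / (T - P) ≤ b / a ∧ b / a ≤ (T - R) / (R - S)) ∧
    (IsNash T R P S a b Strategy.D Strategy.C ↔
      (P - S) / (T - P) ≤ b / a ∧ b / a ≤ (T - R) / (R - S)) ∧
    ((P - S) / (T - P) < b / a ∧ b / a < (T - R) / (R - S) →
      ∀ s t : Strategy, IsNash T R P S a b s t ↔
        ((s = Strategy.C ∧ t = Strategy.D) ∨ (s = Strategy.D ∧ t = Strategy.C))) := by
  have hTP : (0:ℝ) < T - P := by linarith
  have hRS : (0:ℝ) < R - S := by linarith
  -- first inequality characterizations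
  have h1 : (P - S) / (T - P) ≤ b / a ↔ a * P + b * P ≤ a * S + b * T := by
    rw [div_le_div_iff₀ hTP ha]; constructor <;> intro h <;> nlinarith
  have h2 : b / a ≤ (T - R) / (R - S) ↔ a * R + b * R ≤ a * T + b * S := by
    rw [div_le_div_iff₀ ha hRS]; constructor <;> intro h <;> nlinarith
  have key : ∀ x y : Strategy, IsNash T R P S a b x y ↔
      (∀ s', subj T R P S a b s' y ≤ subj T R P S a b x y) ∧
      (∀ t', subj T R P S a b t' x ≤ subj T R P S a b y x) := fun _ _ => Iff.rfl
  have hCD : IsNash T R P S a b Strategy.C Strategy.D ↔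
      (P - S) / (T - P) ≤ b / a ∧ b / a ≤ (T - R) / (R - S) := by
    rw [h1, h2]
    constructor
    · rintro ⟨hr, hc⟩
      exact ⟨by have := hr D; simpa [subj, payoff] using this,
             by have := hc C; simpa [subj, payoff] using this⟩
    · rintro ⟨hx, hy⟩
      constructor <;> intro z <;> cases z <;>
        simp [subj, payoff] <;> linarith
  have hDC : IsNash T R P S a b Strategy.D Strategy.C ↔
      (P - S) / (T - P) ≤ b / a ∧ b / a ≤ (T - R) / (R - S) := by
    rw [h1, h2]
    constructor
    · rintro ⟨hr, hc⟩
      exact ⟨by have := hc D; simpa [subj, payoff] using this,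
             by have := hr C; simpa [subj, payoff] using this⟩
    · rintro ⟨hx, hy⟩
      constructor <;> intro z <;> cases z <;>
        simp [subj, payoff] <;> linarith
  refine ⟨hCD, hDC, ?_⟩
  rintro ⟨hs1, hs2⟩ s t
  have hx : a * P + b * P < a * S + b * T := by
    rw [div_lt_div_iff₀ hTP ha] at hs1; nlinarith
  have hy : a * R + b * R < a * T + b * S := by
    rw [div_lt_div_iff₀ ha hRS] at hs2; nlinarith
  cases s <;> cases t
  · simp only [hCD, hDC]
    constructor
    · rintro ⟨hr, -⟩
      have := hr D; simp [subj, payoff] at this; linarith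
    · rintro (⟨-, h⟩ | ⟨h, -⟩) <;> exact absurd h (by simp)
  · rw [hCD]; simp [le_of_lt hs1, le_of_lt hs2]
  · rw [hDC]; simp [le_of_lt hs1, le_of_lt hs2]
  · constructor
    · rintro ⟨hr, -⟩
      have := hr C; simp [subj, payoff] at this; linarith
    · rintro (⟨h, -⟩ | ⟨-, h⟩) <;> exact absurd h (by simp)
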